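/- Let Γ be a finite connected simplicial graph with no SIL whose vertices are labeled by nontrivial cyclic groups. Then the correspondence v ↦ p_v := ∏_C p_{v,C} (the product over all connected components C of Γ∖st(v)) induces a group homomorphism f̃: G_{Γ₀} → G_{Γ̃}. -/

import Mathlib

open Monoid

namespace ArXiv

universe u uG

variable {V : Type u}

/-- The star of a vertex: the vertex together with its neighbors. -/
def star (Γ : SimpleGraph V) (v : V) : Set V := insert v (Γ.neighborSet v)

/-- `C ⊆ V` is the vertex set of a connected component of the full subgraph of `Γ`
induced on `S`. -/
def IsCompOf (Γ : SimpleGraph V) (S : Set V) (C : Set V) : Prop :=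
  ∃ c : (Γ.induce S).ConnectedComponent, C = Subtype.val '' c.supp

/-- `Γ` has a separating intersection of links: there are distinct non-adjacent vertices
`v, w` such that some connected component of `Γ ∖ (lk(v) ∩ lk(w))` contains neither `v`
nor `w`. -/
def HasSIL (Γ : SimpleGraph V) : Prop :=
  ∃ v w : V, v ≠ w ∧ ¬ Γ.Adj v w ∧
    ∃ C : Set V, IsCompOf Γ ((Γ.neighborSet v ∩ Γ.neighborSet w)ᶜ) C ∧ v ∉ C ∧ w ∉ C

variable (Γ : SimpleGraph V) (G : V → Type uG) [∀ v, Group (G v)]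

/-- The commutator relators defining the graph product. -/
def rels : Set (Monoid.CoprodI G) :=
  {x | ∃ (v w : V) (_ : Γ.Adj v w) (g : G v) (h : G w),
    x = CoprodI.of g * CoprodI.of h * (CoprodI.of g)⁻¹ * (CoprodI.of h)⁻¹}

/-- The graph product of the vertex groups `G v` over the graph `Γ`: the quotient of the
free product by the normal closure of the commutators of adjacent vertex groups. -/
def GraphProduct : Type (max u uG) :=
  Monoid.CoprodI G ⧸ Subgroup.normalClosure (rels Γ G)

instance : Group (GraphProduct Γ G) :=
  inferInstanceAs (Group (Monoid.CoprodI G ⧸ Subgroup.normalClosure (rels Γ G)))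

/-- The canonical map from a vertex group into the graph product. -/
def of {v : V} : G v →* GraphProduct Γ G :=
  (QuotientGroup.mk' (Subgroup.normalClosure (rels Γ G))).comp CoprodI.of

theorem of_commute {v w : V} (h : Γ.Adj v w) (g : G v) (k : G w) :
    Commute (of Γ G g) (of Γ G k) := by
  rw [← commutatorElement_eq_one_iff_commute]
  have hmem : (CoprodI.of g * CoprodI.of k * (CoprodI.of g)⁻¹ * (CoprodI.of k)⁻¹ :
      Monoid.CoprodI G) ∈ Subgroup.normalClosure (rels Γ G) :=
    Subgroup.subset_normalClosure ⟨v, w, h, g, k, rfl⟩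
  have h1 : (QuotientGroup.mk' (Subgroup.normalClosure (rels Γ G)))
      (CoprodI.of g * CoprodI.of k * (CoprodI.of g)⁻¹ * (CoprodI.of k)⁻¹) = 1 :=
    (QuotientGroup.eq_one_iff _).mpr hmem
  simp only [map_mul, map_inv] at h1
  exact (commutatorElement_def _ _).trans h1

/-- `π` is the partial conjugation `π_{v,C}`, for vertex groups with chosen generators
`gen`: it conjugates the generators in `C` by (the generator of) `v` and fixes all other
generators. -/
def IsPartialConj (gen : ∀ v, G v) (π : MulAut (GraphProduct Γ G)) (v : V) (C : Set V) :
    Prop :=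
  (∀ u ∈ C, ∀ g : G u, π (of Γ G g) = of Γ G (gen v) * of Γ G g * (of Γ G (gen v))⁻¹) ∧
  (∀ u ∉ C, ∀ g : G u, π (of Γ G g) = of Γ G g)

/-- `π` is the partial conjugation `π_{a,C}` by the element `a` of the vertex group `G v`:
it conjugates the vertex groups in `C` by `a` and fixes all other vertex groups. -/
def IsPartialConjBy {v : V} (a : G v) (π : MulAut (GraphProduct Γ G)) (C : Set V) : Prop :=
  (∀ u ∈ C, ∀ g : G u, π (of Γ G g) = of Γ G a * of Γ G g * (of Γ G a)⁻¹) ∧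
  (∀ u ∉ C, ∀ g : G u, π (of Γ G g) = of Γ G g)

/-- The vertex set of the graph `Γ̃`: pairs `p_{v,C}` where `C` is a connected component
of `Γ ∖ st(v)`. -/
def TV : Type u := {p : V × Set V // IsCompOf Γ ((star Γ p.1)ᶜ) p.2}

/-- The graph `Γ̃`: vertices `p_{v,C}` and `p_{w,D}` are joined by an edge unless
`v, w` are distinct non-adjacent vertices with `v ∈ D` and `w ∈ C`. -/
def tilde : SimpleGraph (TV Γ) where
  Adj p q := p ≠ q ∧
    ¬(p.1.1 ≠ q.1.1 ∧ ¬ Γ.Adj p.1.1 q.1.1 ∧ p.1.1 ∈ q.1.2 ∧ q.1.1 ∈ p.1.2)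
  symm := by
    refine ⟨?_⟩
    rintro p q ⟨h1, h2⟩
    exact ⟨h1.symm, fun ⟨a, b, c, d⟩ => h2 ⟨a.symm, fun e => b e.symm, d, c⟩⟩
  loopless := ⟨fun p h => h.1 rfl⟩

/-- The graph product `G_{Γ̃}`, where the vertex `p_{v,C}` is labeled by (a copy of) the
group `G v`. -/
abbrev TildeProduct : Type (max u uG) :=
  GraphProduct (tilde Γ) (fun p : TV Γ => G p.1.1)

/-- The element `p_v = ∏_C p_{v,C} ∈ G_{Γ̃}`, the product over all connected components
`C` of `Γ ∖ st(v)` (the factors pairwise commute). -/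
noncomputable def pvert [Finite V] (gen : ∀ v, G v) (v : V) : TildeProduct Γ G :=
  haveI : Fintype {C : Set V // IsCompOf Γ ((star Γ v)ᶜ) C} := Fintype.ofFinite _
  Finset.noncommProd (Finset.univ : Finset {C : Set V // IsCompOf Γ ((star Γ v)ᶜ) C})
    (fun c => of (tilde Γ) (fun p : TV Γ => G p.1.1) (v := ⟨(v, c.1), c.2⟩) (gen v))
    (by
      intro a _ b _ hab
      have hadj : (tilde Γ).Adj ⟨(v, a.1), a.2⟩ ⟨(v, b.1), b.2⟩ := by
        refine ⟨fun h => hab (Subtype.ext (congrArg (fun x : TV Γ => x.1.2) h)), ?_⟩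
        rintro ⟨hne, -⟩
        exact hne rfl
      exact of_commute (tilde Γ) (fun p : TV Γ => G p.1.1) hadj (gen v) (gen v))

/-- The set `Δ` of vertices adjacent to every other vertex of `Γ`. -/
def Delta (Γ : SimpleGraph V) : Set V := {v | ∀ u, u ≠ v → Γ.Adj v u}

/-- The subgroup of the graph product generated by the vertex groups `G v`, `v ∈ T`. -/
def vertexSubgroup (T : Set V) : Subgroup (GraphProduct Γ G) :=
  Subgroup.closure {x | ∃ v ∈ T, ∃ g : G v, x = of Γ G g}

/-- `w` is a reduced word for the element `g` of the graph product: a minimal length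
expression of `g` as a product of nontrivial elements of vertex groups. -/
def IsReducedWord (g : GraphProduct Γ G) (w : List (Σ v : V, G v)) : Prop :=
  (w.map fun l => of Γ G l.2).prod = g ∧ (∀ l ∈ w, l.2 ≠ 1) ∧
    ∀ w' : List (Σ v : V, G v), (w'.map fun l => of Γ G l.2).prod = g →
      w.length ≤ w'.length

/-- The correspondence `v ↦ p_v = ∏_C p_{v,C}` induces a group
homomorphism `f̃ : G_{Γ₀} → G_{Γ̃}`. -/
theorem ftilde_exists {V : Type u} [Finite V] (Γ : SimpleGraph V)
    (hconn : Γ.Connected) (hsil : ¬ HasSIL Γ)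
    (G : V → Type uG) [∀ v, Group (G v)] [∀ v, Nontrivial (G v)]
    (gen : ∀ v, G v) (hgen : ∀ v, Subgroup.zpowers (gen v) = ⊤) :
    ∃ f : GraphProduct (Γ.induce (Delta Γ)ᶜ) (fun u : ↥(Delta Γ)ᶜ => G u.1) →*
        TildeProduct Γ G,
      ∀ u : ↥(Delta Γ)ᶜ,
        f (of (Γ.induce (Delta Γ)ᶜ) (fun x : ↥(Delta Γ)ᶜ => G x.1) (v := u) (gen u.1)) =
          pvert Γ G gen u.1 := by
  classical
  -- each vertex group is commutative (it is cyclic)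
  have hcommG : ∀ (v : V) (g h : G v), Commute g h := by
    intro v g h
    have hg : g ∈ Subgroup.zpowers (gen v) := (hgen v).symm ▸ Subgroup.mem_top g
    have hh : h ∈ Subgroup.zpowers (gen v) := (hgen v).symm ▸ Subgroup.mem_top h
    obtain ⟨m, rfl⟩ := hg
    obtain ⟨n, rfl⟩ := hh
    exact (Commute.refl (gen v)).zpow_zpow m n
  -- commuting of vertex generators of the tilde product
  have key : ∀ (p q : TV Γ), (p.1.1 = q.1.1 ∨ Γ.Adj p.1.1 q.1.1) →
      ∀ (g : G p.1.1) (h : G q.1.1),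
      Commute (of (tilde Γ) (fun r : TV Γ => G r.1.1) (v := p) g)
        (of (tilde Γ) (fun r : TV Γ => G r.1.1) (v := q) h) := by
    intro p q hpq g h
    by_cases hpq' : p = q
    · subst hpq'
      have : g * h = h * g := hcommG _ g h
      show _ * _ = _ * _
      rw [← map_mul, ← map_mul, this]
    · refine of_commute (tilde Γ) (fun r : TV Γ => G r.1.1) ?_ g h
      refine ⟨hpq', ?_⟩
      rintro ⟨hne, hnadj, -, -⟩
      rcases hpq with h1 | h1
      · exact hne h1
      · exact hnadj h1
  -- the homomorphism `G v → G_{Γ̃}`, `g ↦ ∏_C (copy of g at p_{v,C})`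
  haveI : ∀ v : V, Fintype {C : Set V // IsCompOf Γ ((star Γ v)ᶜ) C} :=
    fun v => Fintype.ofFinite _
  let diag : ∀ v : V, G v →* (∀ _ : {C : Set V // IsCompOf Γ ((star Γ v)ᶜ) C}, G v) :=
    fun v => { toFun := fun g _ => g, map_one' := rfl, map_mul' := fun _ _ => rfl }
  let φ : ∀ v : V, G v →* TildeProduct Γ G := fun v =>
    (MonoidHom.noncommPiCoprod
      (fun c : {C : Set V // IsCompOf Γ ((star Γ v)ᶜ) C} =>
        of (tilde Γ) (fun r : TV Γ => G r.1.1) (v := ⟨(v, c.1), c.2⟩))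
      (fun a b _ x y => key ⟨(v, a.1), a.2⟩ ⟨(v, b.1), b.2⟩ (Or.inl rfl) x y)).comp (diag v)
  have hφ : ∀ (v w : V), Γ.Adj v w → ∀ (g : G v) (h : G w), Commute (φ v g) (φ w h) := by
    intro v w hadj g h
    refine Finset.noncommProd_commute _ _
      (fun a _ b _ _ => key ⟨(w, a.1), a.2⟩ ⟨(w, b.1), b.2⟩ (Or.inl rfl) h h) _ ?_
    intro c _
    refine (Finset.noncommProd_commute _ _
      (fun a _ b _ _ => key ⟨(v, a.1), a.2⟩ ⟨(v, b.1), b.2⟩ (Or.inl rfl) g g) _ ?_).symm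
    intro d _
    exact (key ⟨(v, d.1), d.2⟩ ⟨(w, c.1), c.2⟩ (Or.inr hadj) g h).symm
  -- lift to the free product of the vertex groups over `(Delta Γ)ᶜ`
  let Φ : Monoid.CoprodI (fun u : ↥(Delta Γ)ᶜ => G u.1) →* TildeProduct Γ G :=
    CoprodI.lift (fun u : ↥(Delta Γ)ᶜ => φ u.1)
  have hker : Subgroup.normalClosure
      (rels (Γ.induce (Delta Γ)ᶜ) (fun u : ↥(Delta Γ)ᶜ => G u.1)) ≤ Φ.ker := by
    apply Subgroup.normalClosure_le_normal
    rintro x ⟨a, b, hab, g, h, rfl⟩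
    have hadj : Γ.Adj a.1 b.1 := hab
    have hc : Commute (φ a.1 g) (φ b.1 h) := hφ a.1 b.1 hadj g h
    simp only [SetLike.mem_coe, MonoidHom.mem_ker, map_mul, map_inv, CoprodI.lift_of, Φ]
    rw [← commutatorElement_def, commutatorElement_eq_one_iff_commute]
    exact hc
  refine ⟨QuotientGroup.lift _ Φ hker, ?_⟩
  intro u
  have : QuotientGroup.lift _ Φ hker
      (of (Γ.induce (Delta Γ)ᶜ) (fun x : ↥(Delta Γ)ᶜ => G x.1) (v := u) (gen u.1)) =
      φ u.1 (gen u.1) := by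
    exact CoprodI.lift_of _ _
  refine this.trans ?_
  have univ_indep : ∀ {α : Type u} (i1 i2 : Fintype α) (f : α → TildeProduct Γ G) h1 h2,
      Finset.noncommProd (@Finset.univ α i1) f h1 =
        Finset.noncommProd (@Finset.univ α i2) f h2 := by
    intro α i1 i2 f h1 h2
    cases Subsingleton.elim i1 i2
    rfl
  refine univ_indep _ _ _ ?_ ?_ <;>
  · intro a _ b _ _
    exact key ⟨(u.1, a.1), a.2⟩ ⟨(u.1, b.1), b.2⟩ (Or.inl rfl) (gen u.1) (gen u.1)


end ArXiv
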